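/- For diagonal matrices $x_1 = \mathrm{diag}(\alpha_1,\dots,\alpha_n)$ and $x_2 = \mathrm{diag}(\beta_1,\dots,\beta_{n+1})$, one has the expansion $\det(x_1 \otimes I_{n+1} + I_n \otimes x_2) = \sum_{\lambda \subset n \times (n+1)} m_{n+1-\lambda}(\alpha_1,\dots,\alpha_n)\, b_\lambda$, where the sum is over partitions $\lambda = (\lambda_1 \ge \cdots \ge \lambda_n)$ with $\lambda_1 \le n+1$, $b_\lambda = \prod_i b_{\lambda_i}$ with $b_j = e_j(\beta_1,\dots,\beta_{n+1})$, and $n+1-\lambda$ is the partition $(n+1-\lambda_n \ge \cdots \ge n+1-\lambda_1)$. -/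

import Mathlib

/-- The monomial symmetric polynomial in `n` variables attached to the exponent
vector `lam : Fin n → ℕ`: the sum of all distinct monomials obtained by permuting
the exponent vector. -/
def msym {R : Type*} [CommRing R] (n : ℕ) (lam : Fin n → ℕ) (α : Fin n → R) : R :=
  ∑ v ∈ Finset.image (fun σ : Equiv.Perm (Fin n) => lam ∘ σ) Finset.univ, ∏ i, α i ^ v i

/-- The `k`-th elementary symmetric polynomial in the `n` variables `α`. -/
def esym {R : Type*} [CommRing R] (n k : ℕ) (α : Fin n → R) : R :=
  ∑ s ∈ Finset.powersetCard k (Finset.univ : Finset (Fin n)), ∏ i ∈ s, α i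

/-- The finset of partitions `λ = (λ₁ ≥ ⋯ ≥ λ_n)` with `n` parts (allowing zero parts),
each part at most `B`; i.e. partitions whose Young diagram fits in an `n × B` box,
encoded as weakly decreasing functions `Fin n → ℕ`. -/
def partsBdd (n B : ℕ) : Finset (Fin n → ℕ) :=
  ((Finset.univ : Finset (Fin n → Fin (B + 1))).filter
      (fun f => ∀ i j : Fin n, i ≤ j → (f j : ℕ) ≤ (f i : ℕ))).image
    (fun f i => (f i : ℕ))

open Finset

lemma mem_partsBdd {n B : ℕ} {lam : Fin n → ℕ} :
    lam ∈ partsBdd n B ↔ (∀ i j : Fin n, i ≤ j → lam j ≤ lam i) ∧ ∀ i, lam i ≤ B := by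
  constructor
  · rintro h
    simp only [partsBdd, mem_image, mem_filter, mem_univ, true_and] at h
    obtain ⟨f, hf, rfl⟩ := h
    exact ⟨hf, fun i => Nat.lt_succ_iff.mp (f i).isLt⟩
  · rintro ⟨h1, h2⟩
    simp only [partsBdd, mem_image, mem_filter, mem_univ, true_and]
    exact ⟨fun i => ⟨lam i, Nat.lt_succ_of_le (h2 i)⟩, h1, rfl⟩

lemma prod_add_esym {R : Type*} [CommRing R] (m : ℕ) (β : Fin m → R) (a : R) :
    ∏ j, (a + β j) = ∑ k ∈ range (m + 1), a ^ k * esym m (m - k) β := by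
  rw [Finset.prod_add, Finset.sum_powerset]
  rw [card_univ, Fintype.card_fin]
  refine Finset.sum_congr rfl fun k hk => ?_
  rw [mem_range, Nat.lt_succ_iff] at hk
  rw [esym, Finset.mul_sum]
  refine Finset.sum_nbij' (fun t => univ \ t) (fun t => univ \ t) ?_ ?_ ?_ ?_ ?_
  · intro t ht
    rw [mem_powersetCard_univ] at ht ⊢
    rw [card_univ_diff, Fintype.card_fin, ht]
  · intro t ht
    rw [mem_powersetCard_univ] at ht ⊢
    rw [card_univ_diff, Fintype.card_fin, ht]
    omega
  · intro t ht; exact Finset.sdiff_sdiff_eq_self (subset_univ t)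
  · intro t ht; exact Finset.sdiff_sdiff_eq_self (subset_univ t)
  · intro t ht
    rw [mem_powersetCard_univ] at ht
    rw [Finset.prod_const, ht]

open Kronecker

/-- Expansion of the determinant of the Kronecker sum of diagonal matrices:
`det(x₁ ⊗ I_{n+1} + I_n ⊗ x₂) = ∑_{λ ⊂ n × (n+1)} m_{n+1-λ}(α) b_λ`,
where `b_λ = ∏ₖ e_{λₖ}(β)`. -/
theorem det_kroneckerSum_diagonal_expansion {R : Type*} [CommRing R] (n : ℕ)
    (α : Fin n → R) (β : Fin (n + 1) → R) :
    (Matrix.diagonal α ⊗ₖ (1 : Matrix (Fin (n + 1)) (Fin (n + 1)) R)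
      + (1 : Matrix (Fin n) (Fin n) R) ⊗ₖ Matrix.diagonal β).det
      = ∑ lam ∈ partsBdd n (n + 1),
          msym n (fun i => n + 1 - lam i) α * ∏ k : Fin n, esym (n + 1) (lam k) β := by
  -- Step 1: the matrix is diagonal with entries `α i + β j`, so the determinant is a product
  have h1 : (Matrix.diagonal α ⊗ₖ (1 : Matrix (Fin (n + 1)) (Fin (n + 1)) R)
      + (1 : Matrix (Fin n) (Fin n) R) ⊗ₖ Matrix.diagonal β).det
      = ∏ i : Fin n, ∏ j : Fin (n + 1), (α i + β j) := by
    rw [← Matrix.diagonal_one, ← Matrix.diagonal_one, Matrix.diagonal_kronecker_diagonal,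
      Matrix.diagonal_kronecker_diagonal, Matrix.diagonal_add, Matrix.det_diagonal]
    rw [Fintype.prod_prod_type]
    simp
  rw [h1]
  -- Step 2: expand each inner product via elementary symmetric polynomials
  have h2 : ∀ i : Fin n, ∏ j, (α i + β j)
      = ∑ k ∈ range (n + 2), α i ^ k * esym (n + 1) (n + 1 - k) β :=
    fun i => prod_add_esym (n + 1) β (α i)
  rw [Finset.prod_congr rfl fun i _ => h2 i]
  rw [Finset.prod_univ_sum]
  -- Step 3: group the sum over exponent vectors by the associated partition
  set g : (Fin n → ℕ) → (Fin n → ℕ) :=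
    fun c => fun i => n + 1 - (c ∘ Tuple.sort c) i with hg
  have hmaps : ∀ c ∈ Fintype.piFinset (fun _ : Fin n => range (n + 2)), g c ∈ partsBdd n (n + 1) := by
    intro c hc
    rw [mem_partsBdd]
    constructor
    · intro i j hij
      have := Tuple.monotone_sort c hij
      simp only [hg]
      omega
    · intro i; simp only [hg]; omega
  rw [← Finset.sum_fiberwise_of_maps_to hmaps]
  refine Finset.sum_congr rfl fun lam hlam => ?_
  rw [mem_partsBdd] at hlam
  obtain ⟨hanti, hle⟩ := hlam
  set lam' : Fin n → ℕ := fun i => n + 1 - lam i with hlam'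
  have hlam'mono : Monotone lam' := by
    intro i j hij
    have := hanti i j hij
    have := hle i
    simp only [hlam']
    omega
  -- the fiber over `lam` is exactly the orbit of `lam'`
  have hfiber : (Fintype.piFinset (fun _ : Fin n => range (n + 2))).filter (fun c => g c = lam)
      = Finset.image (fun σ : Equiv.Perm (Fin n) => lam' ∘ σ) Finset.univ := by
    ext c
    simp only [mem_filter, Fintype.mem_piFinset, mem_range, mem_image, mem_univ, true_and]
    constructor
    · rintro ⟨hcv, hgc⟩
      refine ⟨(Tuple.sort c)⁻¹, ?_⟩
      have hsorted : c ∘ Tuple.sort c = lam' := by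
        funext i
        have h1 : lam i = n + 1 - (c ∘ Tuple.sort c) i := by
          rw [← hgc]
        have h2 : c (Tuple.sort c i) < n + 2 := hcv _
        simp only [hlam', Function.comp] at *
        omega
      funext i
      have := congrFun hsorted ((Tuple.sort c)⁻¹ i)
      simp only [Function.comp] at this ⊢
      rw [← this, Equiv.Perm.coe_inv, Equiv.apply_symm_apply]
    · rintro ⟨σ, rfl⟩
      constructor
      · intro i
        simp only [Function.comp, hlam']
        omega
      · have hmono1 : Monotone ((lam' ∘ ⇑σ) ∘ ⇑(σ⁻¹)) := by
          have : (lam' ∘ ⇑σ) ∘ ⇑(σ⁻¹) = lam' := by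
            funext i; simp [Function.comp, Equiv.Perm.coe_inv, Equiv.apply_symm_apply]
          rw [this]; exact hlam'mono
        have hmono2 : Monotone ((lam' ∘ σ) ∘ Tuple.sort (lam' ∘ σ)) :=
          Tuple.monotone_sort _
        have huniq := Tuple.unique_monotone hmono1 hmono2
        funext i
        have := congrFun huniq i
        simp only [hg, Function.comp] at this ⊢
        rw [← this]
        have := hle i
        simp only [hlam', Equiv.Perm.coe_inv, Equiv.apply_symm_apply]
        omega
  rw [hfiber]
  -- on the orbit, the `esym` factor is constant
  have hconst : ∀ c ∈ Finset.image (fun σ : Equiv.Perm (Fin n) => lam' ∘ σ) Finset.univ,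
      ∏ i, (α i ^ c i * esym (n + 1) (n + 1 - c i) β)
      = (∏ i, α i ^ c i) * ∏ k, esym (n + 1) (lam k) β := by
    intro c hc
    rw [mem_image] at hc
    obtain ⟨σ, _, rfl⟩ := hc
    rw [Finset.prod_mul_distrib]
    congr 1
    have : ∀ i, n + 1 - (lam' ∘ σ) i = lam (σ i) := by
      intro i
      have := hle (σ i)
      simp only [hlam', Function.comp]
      omega
    rw [Finset.prod_congr rfl fun i _ => by rw [this i]]
    exact Equiv.prod_comp σ (fun k => esym (n + 1) (lam k) β)
  rw [Finset.sum_congr rfl hconst, ← Finset.sum_mul]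
  rfl
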